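/- For all integers n, m ≥ 1, the domination polynomial of the n×m rook graph satisfies D_{R_{n,m}}(x) = ((1+x)^n − 1)^m + Σ_{c=0}^{m−1} C(m,c) Σ_{k=0}^{c} (−1)^{c−k} C(c,k) ((1+x)^k − 1)^n as an identity in the polynomial ring ℤ[x]. -/

import Mathlib

open Finset Polynomial

/-- The `n × m` rook graph: vertices are squares `(a,b)`; two distinct squares are
adjacent iff they share a row or a column. -/
def rookGraph (n m : ℕ) : SimpleGraph (Fin n × Fin m) where
  Adj v w := v ≠ w ∧ (v.1 = w.1 ∨ v.2 = w.2)
  symm := by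
    constructor
    rintro v w ⟨h1, h2⟩
    exact ⟨h1.symm, h2.imp Eq.symm Eq.symm⟩
  loopless := by
    constructor
    rintro v ⟨h1, _⟩
    exact h1 rfl

/-- `S` is a dominating set of the `n × m` rook graph. -/
def IsDomSet (n m : ℕ) (S : Finset (Fin n × Fin m)) : Prop :=
  ∀ v, v ∈ S ∨ ∃ u ∈ S, (rookGraph n m).Adj u v

/-- `domCount n m k` is the number of dominating sets of cardinality `k`
of the `n × m` rook graph. -/
noncomputable def domCount (n m k : ℕ) : ℕ :=
  Set.ncard {S : Finset (Fin n × Fin m) | S.card = k ∧ IsDomSet n m S}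

/-- `ECount n m k` is the number of `k`-element subsets of `{1,…,n} × {1,…,m}`
that meet every row and every column. -/
noncomputable def ECount (n m k : ℕ) : ℕ :=
  Set.ncard {T : Finset (Fin n × Fin m) | T.card = k ∧
    (∀ r : Fin n, ∃ c : Fin m, (r, c) ∈ T) ∧ (∀ c : Fin m, ∃ r : Fin n, (r, c) ∈ T)}

/-- The domination polynomial of the `n × m` rook graph, as a polynomial over `ℤ`. -/
noncomputable def domPoly (n m : ℕ) : Polynomial ℤ :=
  ∑ k ∈ Finset.range (n * m + 1), Polynomial.C (domCount n m k : ℤ) * Polynomial.X ^ k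

open scoped Classical

section Aux

lemma sum_subsets_pow_card {β : Type*} [DecidableEq β] (D : Finset β) :
    ∑ T ∈ D.powerset, (X : ℤ[X]) ^ T.card = (1 + X) ^ D.card := by
  calc ∑ T ∈ D.powerset, (X : ℤ[X]) ^ T.card
      = ∑ T ∈ D.powerset, (∏ _i ∈ T, (X : ℤ[X])) * ∏ _i ∈ D \ T, (1 : ℤ[X]) := by
        simp
    _ = ∏ _i ∈ D, ((X : ℤ[X]) + 1) := (Finset.prod_add _ _ _).symm
    _ = (1 + X) ^ D.card := by rw [Finset.prod_const]; ring

lemma sum_nonempty_subsets {β : Type*} [Fintype β] [DecidableEq β] (D : Finset β) :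
    (∑ T : Finset β, if T.Nonempty ∧ T ⊆ D then (X : ℤ[X]) ^ T.card else 0)
      = (1 + X) ^ D.card - 1 := by
  have h1 : ∀ T : Finset β, (if T.Nonempty ∧ T ⊆ D then (X : ℤ[X]) ^ T.card else 0)
      = if T ⊆ D then (if T.Nonempty then (X : ℤ[X]) ^ T.card else 0) else 0 := by
    intro T; by_cases h : T ⊆ D <;> by_cases h2 : T.Nonempty <;> simp [h, h2]
  simp only [h1]
  rw [← Finset.sum_filter]
  have h2 : (univ : Finset (Finset β)).filter (· ⊆ D) = D.powerset := by
    ext T; simp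
  rw [h2]
  have h3 : ∀ T ∈ D.powerset, (if T.Nonempty then (X : ℤ[X]) ^ T.card else 0)
      = (X : ℤ[X]) ^ T.card - if T = ∅ then 1 else 0 := by
    intro T _
    rcases T.eq_empty_or_nonempty with h | h
    · simp [h]
    · simp [h, h.ne_empty]
  rw [Finset.sum_congr rfl h3, Finset.sum_sub_distrib, sum_subsets_pow_card,
    Finset.sum_ite_eq' D.powerset ∅ (fun _ => (1 : ℤ[X]))]
  simp

/-- The bijection between functions `α → Finset β` and subsets of `α × β`. -/
def rowEquiv (α β : Type*) [Fintype α] [Fintype β] [DecidableEq α] [DecidableEq β] :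
    (α → Finset β) ≃ Finset (α × β) where
  toFun g := univ.filter fun p => p.2 ∈ g p.1
  invFun S a := univ.filter fun b => (a, b) ∈ S
  left_inv g := by funext a; ext b; simp
  right_inv S := by ext p; simp

lemma mem_rowEquiv {α β : Type*} [Fintype α] [Fintype β] [DecidableEq α] [DecidableEq β]
    (g : α → Finset β) (a : α) (b : β) : (a, b) ∈ rowEquiv α β g ↔ b ∈ g a := by
  simp [rowEquiv]

lemma card_rowEquiv {α β : Type*} [Fintype α] [Fintype β] [DecidableEq α] [DecidableEq β]
    (g : α → Finset β) : (rowEquiv α β g).card = ∑ a, (g a).card := by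
  rw [Finset.card_eq_sum_card_fiberwise (f := Prod.fst) (t := univ) (fun x _ => mem_univ _)]
  refine Finset.sum_congr rfl fun a _ => ?_
  have h : (rowEquiv α β g).filter (fun p => p.1 = a) = (g a).image (Prod.mk a) := by
    ext ⟨x, y⟩
    simp only [rowEquiv, Equiv.coe_fn_mk, Finset.mem_filter, Finset.mem_univ, true_and,
      Finset.mem_image]
    constructor
    · rintro ⟨hy, rfl⟩; exact ⟨y, hy, rfl⟩
    · rintro ⟨b, hb, h⟩; cases h; exact ⟨hb, rfl⟩
  rw [h, Finset.card_image_of_injective _ (Prod.mk_right_injective a)]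

lemma key_sum {α β : Type*} [Fintype α] [Fintype β] [DecidableEq α] [DecidableEq β] (D : Finset β) :
    (∑ S : Finset (α × β),
        if (∀ a : α, ∃ b, (a, b) ∈ S) ∧ (∀ p ∈ S, p.2 ∈ D) then (X : ℤ[X]) ^ S.card else 0)
      = ((1 + X) ^ D.card - 1) ^ Fintype.card α := by
  rw [← Equiv.sum_comp (rowEquiv α β)]
  have step : ∀ g : α → Finset β,
      (if (∀ a : α, ∃ b, (a, b) ∈ rowEquiv α β g) ∧ (∀ p ∈ rowEquiv α β g, p.2 ∈ D)
        then (X : ℤ[X]) ^ (rowEquiv α β g).card else 0)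
      = ∏ a : α, (if (g a).Nonempty ∧ g a ⊆ D then (X : ℤ[X]) ^ (g a).card else 0) := by
    intro g
    have hcond : ((∀ a : α, ∃ b, (a, b) ∈ rowEquiv α β g) ∧ (∀ p ∈ rowEquiv α β g, p.2 ∈ D))
        ↔ ∀ a, (g a).Nonempty ∧ g a ⊆ D := by
      constructor
      · rintro ⟨h1, h2⟩ a
        refine ⟨?_, fun b hb => h2 (a, b) ((mem_rowEquiv g a b).2 hb)⟩
        obtain ⟨b, hb⟩ := h1 a
        exact ⟨b, (mem_rowEquiv g a b).1 hb⟩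
      · intro h
        refine ⟨fun a => ?_, fun p hp => ?_⟩
        · obtain ⟨b, hb⟩ := (h a).1
          exact ⟨b, (mem_rowEquiv g a b).2 hb⟩
        · exact (h p.1).2 ((mem_rowEquiv g p.1 p.2).1 hp)
    by_cases h : ∀ a, (g a).Nonempty ∧ g a ⊆ D
    · rw [if_pos (hcond.2 h), card_rowEquiv, ← Finset.prod_pow_eq_pow_sum]
      exact Finset.prod_congr rfl fun a _ => (if_pos (h a)).symm
    · rw [if_neg (fun hc => h (hcond.1 hc))]
      obtain ⟨a, ha⟩ := not_forall.1 h
      refine (Finset.prod_eq_zero (i := a) (mem_univ a) ?_).symm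
      rw [if_neg ha]
  rw [Finset.sum_congr rfl (fun g _ => step g)]
  have := Finset.prod_univ_sum (fun _ : α => (univ : Finset (Finset β)))
    (fun _ T => if T.Nonempty ∧ T ⊆ D then (X : ℤ[X]) ^ T.card else 0)
  rw [Fintype.piFinset_univ] at this
  rw [← this]
  rw [Finset.prod_congr rfl fun a _ => sum_nonempty_subsets D, Finset.prod_const, card_univ]

lemma neg_one_pow_sub' {R : Type*} [CommRing R] {a b : ℕ} (h : b ≤ a) :
    ((-1 : R)) ^ (a - b) = (-1) ^ a * (-1) ^ b := by
  rw [← pow_add]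
  conv_rhs => rw [show a + b = (a - b) + 2 * b by omega]
  rw [pow_add, pow_mul, neg_one_sq, one_pow, mul_one]

lemma sum_superset_sign {β : Type*} [Fintype β] [DecidableEq β] (C : Finset β) :
    (∑ D : Finset β, if C ⊆ D then ((-1 : ℤ[X])) ^ (Fintype.card β - D.card) else 0)
      = if C = univ then 1 else 0 := by
  rw [← Finset.sum_filter]
  rw [Finset.sum_nbij' (i := fun D => D \ C) (j := fun E => C ∪ E)
    (t := (univ \ C).powerset)
    (g := fun E => ((-1 : ℤ[X])) ^ (Fintype.card β - (C ∪ E).card))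
    (fun D hD => by simp only [Finset.mem_powerset]; exact sdiff_subset_sdiff (subset_univ _) le_rfl)
    (fun E hE => by simp)
    (fun D hD => by
      simp only [Finset.mem_filter] at hD
      exact Finset.union_sdiff_of_subset hD.2)
    (fun E hE => by
      simp only [Finset.mem_powerset] at hE
      show (C ∪ E) \ C = E
      exact Finset.union_sdiff_cancel_left
        (Finset.disjoint_left.2 fun x hxC hxE => (Finset.mem_sdiff.1 (hE hxE)).2 hxC))
    (fun D hD => by
      simp only [Finset.mem_filter] at hD
      show _ = ((-1 : ℤ[X])) ^ (Fintype.card β - (C ∪ (D \ C)).card)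
      rw [Finset.union_sdiff_of_subset hD.2])]
  have hcard : ∀ E ∈ (univ \ C).powerset, (C ∪ E).card = C.card + E.card := by
    intro E hE
    simp only [Finset.mem_powerset] at hE
    rw [Finset.card_union_of_disjoint]
    exact Finset.disjoint_left.2 fun x hxC hxE => (Finset.mem_sdiff.1 (hE hxE)).2 hxC
  have hstep : ∀ E ∈ (univ \ C).powerset,
      ((-1 : ℤ[X])) ^ (Fintype.card β - (C ∪ E).card)
        = (-1) ^ (Fintype.card β - C.card) * (-1) ^ E.card := by
    intro E hE
    rw [hcard E hE]
    have h1 : C.card + E.card ≤ Fintype.card β := by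
      rw [← hcard E hE, ← Finset.card_univ]; exact Finset.card_le_card (subset_univ _)
    rw [show Fintype.card β - (C.card + E.card) = (Fintype.card β - C.card) - E.card by omega]
    exact neg_one_pow_sub' (by omega)
  rw [Finset.sum_congr rfl hstep, ← Finset.mul_sum]
  have hint : ∑ E ∈ (univ \ C).powerset, ((-1 : ℤ[X])) ^ E.card
      = if univ \ C = ∅ then 1 else 0 := by
    calc ∑ E ∈ (univ \ C).powerset, ((-1 : ℤ[X])) ^ E.card
        = Polynomial.C (∑ E ∈ (univ \ C).powerset, ((-1 : ℤ)) ^ E.card) := by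
          rw [map_sum]; simp
      _ = _ := by rw [Finset.sum_powerset_neg_one_pow_card]; split <;> simp
  rw [hint]
  have hiff : univ \ C = ∅ ↔ C = univ := by
    rw [Finset.sdiff_eq_empty_iff_subset, Finset.univ_subset_iff]
  by_cases h : C = univ
  · rw [if_pos (hiff.2 h), if_pos h, h, Finset.card_univ]; simp
  · rw [if_neg (fun he => h (hiff.1 he)), if_neg h, mul_zero]

lemma coeff_inversion_int (m k : ℕ) (hk : k ≤ m) :
    ∑ c ∈ range (m + 1), (-1 : ℤ) ^ (c - k) * (m.choose c) * (c.choose k)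
      = if k = m then 1 else 0 := by
  rw [Finset.range_eq_Ico, ← Finset.sum_Ico_consecutive _ (Nat.zero_le k) (by omega)]
  have h1 : ∑ c ∈ Finset.Ico 0 k, (-1 : ℤ) ^ (c - k) * (m.choose c) * (c.choose k) = 0 := by
    refine Finset.sum_eq_zero fun c hc => ?_
    rw [Finset.mem_Ico] at hc
    rw [Nat.choose_eq_zero_of_lt hc.2]
    simp
  rw [h1, zero_add, Finset.sum_Ico_eq_sum_range]
  have h2 : ∀ j ∈ range (m + 1 - k),
      (-1 : ℤ) ^ ((k + j) - k) * (m.choose (k + j)) * ((k + j).choose k)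
        = (m.choose k) * ((-1 : ℤ) ^ j * ((m - k).choose j)) := by
    intro j hj
    rw [Finset.mem_range] at hj
    have hchoose : m.choose (k + j) * (k + j).choose k = m.choose k * (m - k).choose (k + j - k) :=
      Nat.choose_mul (by omega)
    rw [Nat.add_sub_cancel_left] at hchoose
    have : ((m.choose (k + j)) : ℤ) * ((k + j).choose k) = (m.choose k) * ((m - k).choose j) := by
      exact_mod_cast congrArg (Nat.cast : ℕ → ℤ) hchoose
    rw [Nat.add_sub_cancel_left, mul_assoc, this]
    ring
  rw [Finset.sum_congr rfl h2, ← Finset.mul_sum,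
    show m + 1 - k = (m - k) + 1 by omega, Int.alternating_sum_range_choose]
  by_cases h : k = m
  · subst h; simp
  · rw [if_neg (by omega : ¬ m - k = 0), if_neg h, mul_zero]

lemma binom_inversion {R : Type*} [CommRing R] (f : ℕ → R) (m : ℕ) :
    ∑ c ∈ range (m + 1), (m.choose c : R) *
        ∑ k ∈ range (c + 1), (-1 : R) ^ (c - k) * (c.choose k : R) * f k = f m := by
  have hextend : ∀ c ∈ range (m + 1),
      (m.choose c : R) * ∑ k ∈ range (c + 1), (-1 : R) ^ (c - k) * (c.choose k : R) * f k
        = ∑ k ∈ range (m + 1), (m.choose c : R) * ((-1 : R) ^ (c - k) * (c.choose k : R) * f k) := by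
    intro c hc
    rw [Finset.mem_range] at hc
    rw [Finset.mul_sum]
    refine Finset.sum_subset (by intro x hx; rw [Finset.mem_range] at *; omega) ?_
    intro k _ hk
    rw [Finset.mem_range, not_lt] at hk
    rw [Nat.choose_eq_zero_of_lt (show c < k by omega)]
    simp
  rw [Finset.sum_congr rfl hextend, Finset.sum_comm]
  have hinner : ∀ k ∈ range (m + 1),
      ∑ c ∈ range (m + 1), (m.choose c : R) * ((-1 : R) ^ (c - k) * (c.choose k : R) * f k)
        = (if k = m then 1 else 0) * f k := by
    intro k hk
    rw [Finset.mem_range] at hk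
    have : ∀ c ∈ range (m + 1),
        (m.choose c : R) * ((-1 : R) ^ (c - k) * (c.choose k : R) * f k)
          = (((-1 : ℤ) ^ (c - k) * (m.choose c) * (c.choose k) : ℤ) : R) * f k := by
      intro c _
      push_cast
      ring
    rw [Finset.sum_congr rfl this, ← Finset.sum_mul, ← Int.cast_sum,
      coeff_inversion_int m k (by omega)]
    split <;> simp
  rw [Finset.sum_congr rfl hinner]
  simp only [ite_mul, one_mul, zero_mul]
  rw [Finset.sum_ite_eq' (range (m + 1)) m f, if_pos (Finset.self_mem_range_succ m)]

lemma rows_sum (n m : ℕ) :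
    (∑ S : Finset (Fin n × Fin m),
        if (∀ r : Fin n, ∃ c, (r, c) ∈ S) then (X : ℤ[X]) ^ S.card else 0)
      = ((1 + X) ^ m - 1) ^ n := by
  have h := key_sum (α := Fin n) (β := Fin m) univ
  simp only [Finset.mem_univ, implies_true, and_true, Finset.card_univ, Fintype.card_fin] at h
  exact h

lemma cols_sum (n m : ℕ) :
    (∑ S : Finset (Fin n × Fin m),
        if (∀ c : Fin m, ∃ r, (r, c) ∈ S) then (X : ℤ[X]) ^ S.card else 0)
      = ((1 + X) ^ n - 1) ^ m := by
  set e : Finset (Fin m × Fin n) ≃ Finset (Fin n × Fin m) :=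
    (Equiv.prodComm (Fin m) (Fin n)).finsetCongr with he
  calc ∑ S : Finset (Fin n × Fin m),
        (if (∀ c : Fin m, ∃ r, (r, c) ∈ S) then (X : ℤ[X]) ^ S.card else 0)
      = ∑ T : Finset (Fin m × Fin n),
          (if (∀ c : Fin m, ∃ r, (r, c) ∈ e T) then (X : ℤ[X]) ^ (e T).card else 0) :=
        (Equiv.sum_comp e _).symm
    _ = ∑ T : Finset (Fin m × Fin n),
          (if (∀ a : Fin m, ∃ b, (a, b) ∈ T) then (X : ℤ[X]) ^ T.card else 0) := by
        refine Finset.sum_congr rfl fun T _ => ?_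
        have hmem : ∀ (a : Fin m) (b : Fin n), (b, a) ∈ e T ↔ (a, b) ∈ T := by
          intro a b
          simp [he, Finset.mem_map_equiv]
        have hcard : (e T).card = T.card := by
          simp [he]
        rw [hcard]
        refine if_congr ?_ rfl rfl
        exact forall_congr' fun a => exists_congr fun b => hmem a b
    _ = ((1 + X) ^ n - 1) ^ m := rows_sum m n

lemma both_sum (n m : ℕ) :
    (∑ S : Finset (Fin n × Fin m),
        if (∀ r : Fin n, ∃ c, (r, c) ∈ S) ∧ (∀ c : Fin m, ∃ r, (r, c) ∈ S)
        then (X : ℤ[X]) ^ S.card else 0)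
      = ∑ D : Finset (Fin m), (-1 : ℤ[X]) ^ (m - D.card) * ((1 + X) ^ D.card - 1) ^ n := by
  symm
  calc ∑ D : Finset (Fin m), (-1 : ℤ[X]) ^ (m - D.card) * ((1 + X) ^ D.card - 1) ^ n
      = ∑ D : Finset (Fin m), ∑ S : Finset (Fin n × Fin m),
          (-1 : ℤ[X]) ^ (m - D.card) *
            (if (∀ a : Fin n, ∃ b, (a, b) ∈ S) ∧ (∀ p ∈ S, p.2 ∈ D)
              then (X : ℤ[X]) ^ S.card else 0) := by
        refine Finset.sum_congr rfl fun D _ => ?_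
        have h := key_sum (α := Fin n) (β := Fin m) D
        rw [Fintype.card_fin] at h
        rw [← Finset.mul_sum]
        congr 1
        convert h.symm using 2
        congr
    _ = ∑ S : Finset (Fin n × Fin m), ∑ D : Finset (Fin m),
          (-1 : ℤ[X]) ^ (m - D.card) *
            (if (∀ a : Fin n, ∃ b, (a, b) ∈ S) ∧ (∀ p ∈ S, p.2 ∈ D)
              then (X : ℤ[X]) ^ S.card else 0) := Finset.sum_comm
    _ = ∑ S : Finset (Fin n × Fin m),
          (if (∀ a : Fin n, ∃ b, (a, b) ∈ S) then (X : ℤ[X]) ^ S.card else 0) *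
            ∑ D : Finset (Fin m),
              (if S.image Prod.snd ⊆ D then (-1 : ℤ[X]) ^ (m - D.card) else 0) := by
        refine Finset.sum_congr rfl fun S _ => ?_
        rw [Finset.mul_sum]
        refine Finset.sum_congr rfl fun D _ => ?_
        have hsub : (∀ p ∈ S, p.2 ∈ D) ↔ S.image Prod.snd ⊆ D := by
          rw [Finset.image_subset_iff]
        by_cases h1 : (∀ a : Fin n, ∃ b, (a, b) ∈ S) <;>
          by_cases h2 : (∀ p ∈ S, p.2 ∈ D) <;>
          simp [h1, h2, hsub.symm, mul_comm]
    _ = ∑ S : Finset (Fin n × Fin m),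
          (if (∀ a : Fin n, ∃ b, (a, b) ∈ S) then (X : ℤ[X]) ^ S.card else 0) *
            (if S.image Prod.snd = univ then 1 else 0) := by
        refine Finset.sum_congr rfl fun S _ => ?_
        congr 1
        have hs := sum_superset_sign (S.image Prod.snd)
        rw [Fintype.card_fin] at hs
        exact hs
    _ = ∑ S : Finset (Fin n × Fin m),
          (if (∀ r : Fin n, ∃ c, (r, c) ∈ S) ∧ (∀ c : Fin m, ∃ r, (r, c) ∈ S)
            then (X : ℤ[X]) ^ S.card else 0) := by
        refine Finset.sum_congr rfl fun S _ => ?_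
        have himg : S.image Prod.snd = univ ↔ ∀ c : Fin m, ∃ r, (r, c) ∈ S := by
          constructor
          · intro h c
            have hc : c ∈ S.image Prod.snd := h ▸ mem_univ c
            obtain ⟨p, hp, rfl⟩ := Finset.mem_image.1 hc
            exact ⟨p.1, by simpa using hp⟩
          · intro h
            refine Finset.eq_univ_of_forall fun c => ?_
            obtain ⟨r, hr⟩ := h c
            exact Finset.mem_image.2 ⟨(r, c), hr, rfl⟩
        by_cases h1 : (∀ a : Fin n, ∃ b, (a, b) ∈ S) <;>
          by_cases h2 : (∀ c : Fin m, ∃ r, (r, c) ∈ S) <;>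
          simp [h1, h2, himg]

lemma both_group (n m : ℕ) :
    ∑ D : Finset (Fin m), (-1 : ℤ[X]) ^ (m - D.card) * ((1 + X) ^ D.card - 1) ^ n
      = ∑ c ∈ range (m + 1),
          (m.choose c : ℤ[X]) * ((-1 : ℤ[X]) ^ (m - c) * ((1 + X) ^ c - 1) ^ n) := by
  have h := Finset.sum_powerset_apply_card
    (f := fun j => (-1 : ℤ[X]) ^ (m - j) * ((1 + X) ^ j - 1) ^ n)
    (x := (univ : Finset (Fin m)))
  rw [Finset.powerset_univ, Finset.card_univ, Fintype.card_fin] at h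
  rw [h]
  refine Finset.sum_congr rfl fun c _ => ?_
  rw [nsmul_eq_mul]

lemma isDomSet_iff (n m : ℕ) (S : Finset (Fin n × Fin m)) :
    IsDomSet n m S ↔ (∀ r : Fin n, ∃ c, (r, c) ∈ S) ∨ (∀ c : Fin m, ∃ r, (r, c) ∈ S) := by
  constructor
  · intro h
    by_cases hr : ∀ r : Fin n, ∃ c, (r, c) ∈ S
    · exact Or.inl hr
    · push_neg at hr
      obtain ⟨r₀, hr₀⟩ := hr
      refine Or.inr fun c => ?_
      rcases h (r₀, c) with hmem | ⟨u, hu, hadj⟩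
      · exact absurd hmem (hr₀ c)
      · obtain ⟨u1, u2⟩ := u
        obtain ⟨hne, h1 | h2⟩ := hadj
        · have h1' : u1 = r₀ := h1
          exact absurd (h1' ▸ hu) (hr₀ u2)
        · have h2' : u2 = c := h2
          exact ⟨u1, h2' ▸ hu⟩
  · rintro (h | h) v
    · obtain ⟨c, hc⟩ := h v.1
      by_cases hv : (v.1, c) = v
      · exact Or.inl (hv ▸ hc)
      · exact Or.inr ⟨(v.1, c), hc, hv, Or.inl rfl⟩
    · obtain ⟨r, hr⟩ := h v.2
      by_cases hv : (r, v.2) = v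
      · exact Or.inl (hv ▸ hr)
      · exact Or.inr ⟨(r, v.2), hr, hv, Or.inr rfl⟩

lemma domCount_eq (n m k : ℕ) :
    domCount n m k = ((univ : Finset (Finset (Fin n × Fin m))).filter
      (fun S => S.card = k ∧ IsDomSet n m S)).card := by
  rw [domCount, ← Set.ncard_coe_finset]
  congr 1
  ext S
  simp

lemma domPoly_eq (n m : ℕ) :
    domPoly n m = ∑ S : Finset (Fin n × Fin m),
      (if IsDomSet n m S then (X : ℤ[X]) ^ S.card else 0) := by
  rw [domPoly, ← Finset.sum_filter]
  have hmap : ∀ S ∈ (univ : Finset (Finset (Fin n × Fin m))).filter (fun S => IsDomSet n m S),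
      S.card ∈ range (n * m + 1) := by
    intro S _
    rw [Finset.mem_range, Nat.lt_succ_iff]
    calc S.card ≤ Fintype.card (Fin n × Fin m) := Finset.card_le_univ S
      _ = n * m := by simp
  rw [← Finset.sum_fiberwise_of_maps_to hmap (fun S => (X : ℤ[X]) ^ S.card)]
  refine Finset.sum_congr rfl fun k _ => ?_
  have h1 : ∀ S ∈ ((univ : Finset (Finset (Fin n × Fin m))).filter
      (fun S => IsDomSet n m S)).filter (fun S => S.card = k),
      (X : ℤ[X]) ^ S.card = X ^ k := by
    intro S hS
    rw [(Finset.mem_filter.1 hS).2]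
  rw [Finset.sum_congr rfl h1, Finset.sum_const, Finset.filter_filter]
  have h2 : ((univ : Finset (Finset (Fin n × Fin m))).filter
        fun S => IsDomSet n m S ∧ S.card = k)
      = (univ : Finset (Finset (Fin n × Fin m))).filter fun S => S.card = k ∧ IsDomSet n m S := by
    simp only [and_comm]
  rw [h2, ← domCount_eq, nsmul_eq_mul]
  simp

end Aux

/-- Intermediate form (eq. (11) in the paper) of the domination polynomial. -/
theorem rook_domination_polynomial_form11 (n m : ℕ) (hn : 1 ≤ n) (hm : 1 ≤ m) :
    domPoly n m =
      ((1 + Polynomial.X) ^ n - 1) ^ m +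
        ∑ c ∈ Finset.range m,
          Polynomial.C (m.choose c : ℤ) *
            ∑ k ∈ Finset.range (c + 1),
              (-1 : Polynomial ℤ) ^ (c - k) * Polynomial.C (c.choose k : ℤ) *
                ((1 + Polynomial.X) ^ k - 1) ^ n := by
  have hsplit : ∀ S ∈ (univ : Finset (Finset (Fin n × Fin m))),
      (if IsDomSet n m S then (X : ℤ[X]) ^ S.card else 0)
      = ((if (∀ r : Fin n, ∃ c, (r, c) ∈ S) then (X : ℤ[X]) ^ S.card else 0)
          + (if (∀ c : Fin m, ∃ r, (r, c) ∈ S) then (X : ℤ[X]) ^ S.card else 0))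
        - (if (∀ r : Fin n, ∃ c, (r, c) ∈ S) ∧ (∀ c : Fin m, ∃ r, (r, c) ∈ S)
            then (X : ℤ[X]) ^ S.card else 0) := by
    intro S _
    by_cases h1 : (∀ r : Fin n, ∃ c, (r, c) ∈ S) <;>
      by_cases h2 : (∀ c : Fin m, ∃ r, (r, c) ∈ S) <;>
      simp [isDomSet_iff, h1, h2] <;> ring
  rw [domPoly_eq, Finset.sum_congr rfl hsplit, Finset.sum_sub_distrib, Finset.sum_add_distrib,
    rows_sum, cols_sum, both_sum, both_group]
  have hinv := binom_inversion (R := ℤ[X]) (fun k => ((1 + X) ^ k - 1) ^ n) m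
  rw [Finset.sum_range_succ] at hinv
  simp only [Nat.choose_self, Nat.cast_one, one_mul] at hinv
  have hEn : ∑ c ∈ range (m + 1),
        (m.choose c : ℤ[X]) * ((-1 : ℤ[X]) ^ (m - c) * ((1 + X) ^ c - 1) ^ n)
      = ∑ k ∈ range (m + 1), (-1 : ℤ[X]) ^ (m - k) * (m.choose k : ℤ[X]) * ((1 + X) ^ k - 1) ^ n :=
    Finset.sum_congr rfl fun c _ => by ring
  rw [hEn]
  simp only [map_natCast]
  linear_combination -hinv
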